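/- (Multilevel Monte Carlo complexity, case β < γ.) Assume M1–M3 hold with β < γ and α ≥ ½ min(β, γ). Then there exists a constant K > 0, depending only on α, β, γ, c₁, c₂, c₃, M and h₀, such that for every 0 < ε < e^{−1} there exist a level L ∈ ℕ and positive integers N_0, …, N_L with MSE(L, (N_ℓ)) ≤ ε² and Cost(L, (N_ℓ)) ≤ K ε^{−2−(γ−β)/α}. -/

import Mathlib

open MeasureTheory ProbabilityTheory Finset

lemma mlmc_hpow_eq (m : ℝ) (hm : 0 < m) (h₀ : ℝ) (hh : 0 < h₀) (c : ℝ) (ℓ : ℕ) :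
    (h₀ / m ^ ℓ) ^ (-c) = h₀ ^ (-c) * (m ^ c) ^ ℓ := by
  have hx : (0:ℝ) < m ^ ℓ := pow_pos hm ℓ
  rw [Real.div_rpow hh.le hx.le, Real.rpow_neg hx.le, div_eq_mul_inv, inv_inv]
  congr 1
  rw [← Real.rpow_natCast m ℓ, ← Real.rpow_mul hm.le, mul_comm, Real.rpow_mul hm.le,
    Real.rpow_natCast]

lemma mlmc_geomS (m : ℝ) (hm : 1 < m) (h₀ : ℝ) (hh : 0 < h₀) (c : ℝ) (hc : 0 < c) (L : ℕ) :
    ∑ ℓ ∈ range (L + 1), (h₀ / m ^ ℓ) ^ (-c)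
      ≤ (m ^ c / (m ^ c - 1)) * (h₀ / m ^ L) ^ (-c) := by
  have hm0 : (0:ℝ) < m := lt_trans one_pos hm
  have hr : 1 < m ^ c := Real.one_lt_rpow_iff_of_pos hm0 |>.mpr (by left; exact ⟨hm, hc⟩)
  have hr0 : (0:ℝ) < m ^ c := lt_trans one_pos hr
  have hr1 : m ^ c - 1 > 0 := by linarith
  calc ∑ ℓ ∈ range (L + 1), (h₀ / m ^ ℓ) ^ (-c)
      = h₀ ^ (-c) * ∑ ℓ ∈ range (L + 1), (m ^ c) ^ ℓ := by
        rw [mul_sum]; exact Finset.sum_congr rfl fun ℓ _ => mlmc_hpow_eq m hm0 h₀ hh c ℓ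
    _ = h₀ ^ (-c) * (((m ^ c) ^ (L + 1) - 1) / (m ^ c - 1)) := by
        rw [geom_sum_eq (ne_of_gt hr)]
    _ ≤ h₀ ^ (-c) * ((m ^ c) ^ (L + 1) / (m ^ c - 1)) := by
        have h1 : (0:ℝ) ≤ h₀ ^ (-c) := Real.rpow_nonneg hh.le _
        have h2 : ((m ^ c) ^ (L + 1) - 1) / (m ^ c - 1) ≤ (m ^ c) ^ (L + 1) / (m ^ c - 1) := by
          gcongr; linarith
        exact mul_le_mul_of_nonneg_left h2 h1
    _ = (m ^ c / (m ^ c - 1)) * (h₀ ^ (-c) * (m ^ c) ^ L) := by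
        rw [pow_succ]; field_simp
    _ = (m ^ c / (m ^ c - 1)) * (h₀ / m ^ L) ^ (-c) := by
        rw [mlmc_hpow_eq m hm0 h₀ hh c L]

lemma mlmc_alg1 (c₂ S xβ xδ ε : ℝ) (hc₂ : 0 < c₂) (hS : 0 < S)
    (hxβ : 0 < xβ) (hxδ : 0 < xδ) (hε : 0 < ε) :
    c₂ * xβ / (2 * c₂ * S * (xβ * xδ) / ε ^ 2) = ε ^ 2 / (2 * S) * xδ⁻¹ := by
  field_simp

lemma mlmc_alg2 (S ε : ℝ) (hS : S ≠ 0) : ε ^ 2 / (2 * S) * S = ε ^ 2 / 2 := by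
  field_simp

set_option maxHeartbeats 1000000 in
theorem mlmc_complexity_beta_lt_gamma
    {Ω : Type*} [MeasurableSpace Ω] {P : Measure Ω} [IsProbabilityMeasure P]
    (M : ℕ) (hM : 2 ≤ M) (h₀ : ℝ) (hh₀ : 0 < h₀)
    (Q : Ω → ℝ) (hQ : MemLp Q 2 P)
    (Qlev : ℕ → Ω → ℝ) (hQlev : ∀ ℓ, MemLp (Qlev ℓ) 2 P)
    (Y : ℕ → Ω → ℝ) (hY0 : Y 0 = Qlev 0)
    (hYl : ∀ ℓ : ℕ, Y (ℓ + 1) = fun ω => Qlev (ℓ + 1) ω - Qlev ℓ ω)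
    (α β γ c₁ c₂ c₃ : ℝ)
    (hα : 0 < α) (hβ : 0 < β) (hγ : 0 < γ) (hc₁ : 0 < c₁) (hc₂ : 0 < c₂) (hc₃ : 0 < c₃)
    (hβγ : β < γ) (hαβγ : α ≥ min β γ / 2)
    (hM1 : ∀ ℓ : ℕ, |∫ ω, (Qlev ℓ ω - Q ω) ∂P| ≤ c₁ * (h₀ / (M : ℝ) ^ ℓ) ^ α)
    (hM2 : ∀ ℓ : ℕ, variance (Y ℓ) P ≤ c₂ * (h₀ / (M : ℝ) ^ ℓ) ^ β) :
    ∃ K : ℝ, 0 < K ∧ ∀ ε : ℝ, 0 < ε → ε < Real.exp (-1) →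
      ∃ (L : ℕ) (N : ℕ → ℕ), (∀ ℓ ≤ L, 1 ≤ N ℓ) ∧
        (∑ ℓ ∈ range (L + 1), variance (Y ℓ) P / (N ℓ : ℝ))
            + (∫ ω, (Qlev L ω - Q ω) ∂P) ^ 2 ≤ ε ^ 2 ∧
        ∑ ℓ ∈ range (L + 1), (N ℓ : ℝ) * (c₃ * (h₀ / (M : ℝ) ^ ℓ) ^ (-γ))
            ≤ K * ε ^ (-2 - (γ - β) / α) := by
  classical
  have hm1 : (1:ℝ) < (M : ℝ) := by
    have : (2:ℝ) ≤ (M:ℝ) := by exact_mod_cast hM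
    linarith
  set m := (M : ℝ) with hmdef
  have hm0 : (0:ℝ) < m := one_pos.trans hm1
  have hδ : 0 < (γ - β) / 2 := by linarith
  set δ := (γ - β) / 2 with hδdef
  have hβ2α : β ≤ 2 * α := by
    have h := hαβγ; rw [min_eq_left hβγ.le] at h; linarith
  set CS := m ^ δ / (m ^ δ - 1) with hCSdef
  set Cγ := m ^ γ / (m ^ γ - 1) with hCγdef
  set D := max (1 / h₀) (m * (Real.sqrt 2 * c₁) ^ (1 / α)) with hDdef
  have hCS0 : 0 < CS := by
    have hr : 1 < m ^ δ := Real.one_lt_rpow_iff_of_pos hm0 |>.mpr (by left; exact ⟨hm1, hδ⟩)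
    have : (0:ℝ) < m ^ δ := lt_trans one_pos hr
    apply div_pos this; linarith
  have hCγ0 : 0 < Cγ := by
    have hr : 1 < m ^ γ := Real.one_lt_rpow_iff_of_pos hm0 |>.mpr (by left; exact ⟨hm1, hγ⟩)
    have : (0:ℝ) < m ^ γ := lt_trans one_pos hr
    apply div_pos this; linarith
  have hD0 : 0 < D := lt_of_lt_of_le (by positivity) (le_max_left _ _)
  have hDδ : 0 < D ^ δ := Real.rpow_pos_of_pos hD0 δ
  have hDγ : 0 < D ^ γ := Real.rpow_pos_of_pos hD0 γ
  have hK0 : 0 < 2 * c₂ * c₃ * (CS * (D ^ δ)) ^ 2 + c₃ * Cγ * D ^ γ := by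
    have h3 : 0 < (CS * (D ^ δ)) ^ 2 := pow_pos (mul_pos hCS0 hDδ) 2
    have h4 := mul_pos (mul_pos (mul_pos two_pos hc₂) hc₃) h3
    have h5 := mul_pos (mul_pos hc₃ hCγ0) hDγ
    linarith
  refine ⟨2 * c₂ * c₃ * (CS * (D ^ δ)) ^ 2 + c₃ * Cγ * D ^ γ, hK0, ?_⟩
  intro ε hε0 hεe
  have hε1 : ε < 1 := by
    have : Real.exp (-1) < 1 := by
      rw [show (1:ℝ) = Real.exp 0 by simp]; exact Real.exp_lt_exp.mpr (by norm_num)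
    linarith
  -- existence of a suitable level
  have hs2 : (0:ℝ) < Real.sqrt 2 := Real.sqrt_pos.mpr two_pos
  have hq0 : 0 < ε / (Real.sqrt 2 * c₁) := div_pos hε0 (mul_pos hs2 hc₁)
  have htα : ((ε / (Real.sqrt 2 * c₁)) ^ (1 / α)) ^ α = ε / (Real.sqrt 2 * c₁) := by
    rw [← Real.rpow_mul hq0.le, one_div, inv_mul_cancel₀ hα.ne', Real.rpow_one]
  have ht0 : 0 < (ε / (Real.sqrt 2 * c₁)) ^ (1 / α) := Real.rpow_pos_of_pos hq0 _
  have hex : ∃ L : ℕ, c₁ * (h₀ / m ^ L) ^ α ≤ ε / Real.sqrt 2 := by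
    obtain ⟨n, hn⟩ := pow_unbounded_of_one_lt (h₀ / (ε / (Real.sqrt 2 * c₁)) ^ (1 / α)) hm1
    refine ⟨n, ?_⟩
    have h1 : h₀ / m ^ n < (ε / (Real.sqrt 2 * c₁)) ^ (1 / α) := by
      rw [div_lt_iff₀ (pow_pos hm0 n)]
      rw [div_lt_iff₀ ht0] at hn
      calc h₀ < m ^ n * (ε / (Real.sqrt 2 * c₁)) ^ (1 / α) := hn
        _ = (ε / (Real.sqrt 2 * c₁)) ^ (1 / α) * m ^ n := by ring
    have h2 : (h₀ / m ^ n) ^ α ≤ ((ε / (Real.sqrt 2 * c₁)) ^ (1 / α)) ^ α :=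
      Real.rpow_le_rpow (by positivity) h1.le hα.le
    rw [htα] at h2
    calc c₁ * (h₀ / m ^ n) ^ α ≤ c₁ * (ε / (Real.sqrt 2 * c₁)) :=
          mul_le_mul_of_nonneg_left h2 hc₁.le
      _ = ε / Real.sqrt 2 := by field_simp
  obtain ⟨L, hLspec, hLmin⟩ : ∃ L : ℕ, (c₁ * (h₀ / m ^ L) ^ α ≤ ε / Real.sqrt 2) ∧
      ∀ k < L, ¬ (c₁ * (h₀ / m ^ k) ^ α ≤ ε / Real.sqrt 2) :=
    ⟨Nat.find hex, Nat.find_spec hex, fun k hk => Nat.find_min hex hk⟩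
  -- bias bound
  have hbias : (∫ ω, (Qlev L ω - Q ω) ∂P) ^ 2 ≤ ε ^ 2 / 2 := by
    have h1 : |∫ ω, (Qlev L ω - Q ω) ∂P| ≤ ε / Real.sqrt 2 := le_trans (hM1 L) hLspec
    calc (∫ ω, (Qlev L ω - Q ω) ∂P) ^ 2 = |∫ ω, (Qlev L ω - Q ω) ∂P| ^ 2 := (sq_abs _).symm
      _ ≤ (ε / Real.sqrt 2) ^ 2 := pow_le_pow_left₀ (abs_nonneg _) h1 2
      _ = ε ^ 2 / 2 := by rw [div_pow, Real.sq_sqrt (by norm_num : (0:ℝ) ≤ 2)]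
  -- bound on h_L⁻¹
  have hεinv : 1 ≤ ε ^ (-1 / α) := by
    have h0 : ε ^ (0:ℝ) ≤ ε ^ (-1 / α) :=
      Real.rpow_le_rpow_of_exponent_ge hε0 hε1.le
        (by rw [neg_div]; exact neg_nonpos.mpr (le_of_lt (one_div_pos.mpr hα)))
    rwa [Real.rpow_zero] at h0
  have hhL : (h₀ / m ^ L)⁻¹ ≤ D * ε ^ (-1 / α) := by
    rcases Nat.eq_zero_or_pos L with h0 | hpos
    · subst h0
      simp only [pow_zero, div_one]
      calc h₀⁻¹ = 1 / h₀ := (one_div h₀).symm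
        _ ≤ D := le_max_left _ _
        _ = D * 1 := (mul_one D).symm
        _ ≤ D * ε ^ (-1 / α) := mul_le_mul_of_nonneg_left hεinv hD0.le
    · obtain ⟨L', hL'⟩ : ∃ L', L = L' + 1 := ⟨L - 1, (Nat.succ_pred_eq_of_pos hpos).symm⟩
      have hmin : ¬ (c₁ * (h₀ / m ^ L') ^ α ≤ ε / Real.sqrt 2) := hLmin L' (by omega)
      push_neg at hmin
      have hx0 : 0 < h₀ / m ^ L' := div_pos hh₀ (pow_pos hm0 L')
      have h2 : ε / (Real.sqrt 2 * c₁) < (h₀ / m ^ L') ^ α := by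
        rw [div_lt_iff₀ (mul_pos hs2 hc₁)]
        rw [div_lt_iff₀ hs2] at hmin
        calc ε < c₁ * (h₀ / m ^ L') ^ α * Real.sqrt 2 := hmin
          _ = (h₀ / m ^ L') ^ α * (Real.sqrt 2 * c₁) := by ring
      have htx : (ε / (Real.sqrt 2 * c₁)) ^ (1 / α) < h₀ / m ^ L' := by
        by_contra hcon
        push_neg at hcon
        have h3 := Real.rpow_le_rpow hx0.le hcon hα.le
        rw [htα] at h3
        linarith
      have heq : h₀ / m ^ L = (h₀ / m ^ L') / m := by
        rw [hL', pow_succ, div_div]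
      rw [heq, inv_div]
      have h5 : m / (h₀ / m ^ L') ≤ m / (ε / (Real.sqrt 2 * c₁)) ^ (1 / α) :=
        div_le_div_of_nonneg_left hm0.le ht0 htx.le
      refine le_trans h5 ?_
      have h6 : m / (ε / (Real.sqrt 2 * c₁)) ^ (1 / α)
          = (m * (Real.sqrt 2 * c₁) ^ (1 / α)) * ε ^ (-1 / α) := by
        rw [Real.div_rpow hε0.le (mul_pos hs2 hc₁).le,
          show (-1 / α) = -(1 / α) by ring, Real.rpow_neg hε0.le]
        have hε' : (0:ℝ) < ε ^ (1 / α) := Real.rpow_pos_of_pos hε0 _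
        have hsc : (0:ℝ) < (Real.sqrt 2 * c₁) ^ (1 / α) :=
          Real.rpow_pos_of_pos (mul_pos hs2 hc₁) _
        field_simp
      rw [h6, hDdef]
      exact mul_le_mul_of_nonneg_right (le_max_right _ _) (Real.rpow_nonneg hε0.le _)
  set S := ∑ ℓ ∈ range (L + 1), (h₀ / m ^ ℓ) ^ (-δ) with hSdef
  have hS0 : 0 < S := by
    apply Finset.sum_pos (fun ℓ _ => Real.rpow_pos_of_pos (div_pos hh₀ (pow_pos hm0 ℓ)) _)
    exact nonempty_range_iff.mpr (Nat.succ_ne_zero L)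
  set A : ℕ → ℝ := fun ℓ => 2 * c₂ * S * (h₀ / m ^ ℓ) ^ ((β + γ) / 2) / ε ^ 2 with hAdef
  have hA0 : ∀ ℓ, 0 < A ℓ := by
    intro ℓ
    have hx : (0:ℝ) < h₀ / m ^ ℓ := div_pos hh₀ (pow_pos hm0 ℓ)
    have hx2 := Real.rpow_pos_of_pos hx ((β + γ) / 2)
    exact div_pos (mul_pos (mul_pos (mul_pos two_pos hc₂) hS0) hx2) (pow_pos hε0 2)
  refine ⟨L, fun ℓ => ⌈A ℓ⌉₊, fun ℓ _ => Nat.one_le_ceil_iff.mpr (hA0 ℓ), ?_, ?_⟩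
  · -- MSE bound
    have hvar : ∑ ℓ ∈ range (L + 1), variance (Y ℓ) P / (⌈A ℓ⌉₊ : ℝ) ≤ ε ^ 2 / 2 := by
      have step : ∀ ℓ ∈ range (L + 1),
          variance (Y ℓ) P / (⌈A ℓ⌉₊ : ℝ) ≤ ε ^ 2 / (2 * S) * (h₀ / m ^ ℓ) ^ (-δ) := by
        intro ℓ _
        have hx : (0:ℝ) < h₀ / m ^ ℓ := div_pos hh₀ (pow_pos hm0 ℓ)
        have hceil : A ℓ ≤ (⌈A ℓ⌉₊ : ℝ) := Nat.le_ceil _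
        have h1 : variance (Y ℓ) P / (⌈A ℓ⌉₊ : ℝ) ≤ (c₂ * (h₀ / m ^ ℓ) ^ β) / A ℓ :=
          div_le_div₀ (by positivity) (hM2 ℓ) (hA0 ℓ) hceil
        refine le_trans h1 (le_of_eq ?_)
        have hsplit : (h₀ / m ^ ℓ) ^ ((β + γ) / 2)
            = (h₀ / m ^ ℓ) ^ β * (h₀ / m ^ ℓ) ^ δ := by
          rw [← Real.rpow_add hx]; congr 1; rw [hδdef]; ring
        have hβ0 : (0:ℝ) < (h₀ / m ^ ℓ) ^ β := Real.rpow_pos_of_pos hx β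
        have hδ0 : (0:ℝ) < (h₀ / m ^ ℓ) ^ δ := Real.rpow_pos_of_pos hx δ
        rw [Real.rpow_neg hx.le]
        simp only [hAdef]
        rw [hsplit]
        exact mlmc_alg1 c₂ S _ _ ε hc₂ hS0 hβ0 hδ0 hε0
      calc ∑ ℓ ∈ range (L + 1), variance (Y ℓ) P / (⌈A ℓ⌉₊ : ℝ)
          ≤ ∑ ℓ ∈ range (L + 1), ε ^ 2 / (2 * S) * (h₀ / m ^ ℓ) ^ (-δ) :=
            Finset.sum_le_sum step
        _ = ε ^ 2 / (2 * S) * S := by rw [← mul_sum, ← hSdef]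
        _ = ε ^ 2 / 2 := mlmc_alg2 S ε hS0.ne'
    linarith
  · -- cost bound
    have hx : ∀ ℓ : ℕ, (0:ℝ) < h₀ / m ^ ℓ := fun ℓ => div_pos hh₀ (pow_pos hm0 ℓ)
    have hb : ∀ ℓ : ℕ, (h₀ / m ^ ℓ) ^ ((β + γ) / 2) * (h₀ / m ^ ℓ) ^ (-γ)
        = (h₀ / m ^ ℓ) ^ (-δ) := by
      intro ℓ; rw [← Real.rpow_add (hx ℓ)]; congr 1; rw [hδdef]; ring
    have hstep : ∀ ℓ ∈ range (L + 1),
        ((⌈A ℓ⌉₊ : ℝ)) * (c₃ * (h₀ / m ^ ℓ) ^ (-γ))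
          ≤ (2 * c₂ * c₃ * S / ε ^ 2) * (h₀ / m ^ ℓ) ^ (-δ)
            + c₃ * (h₀ / m ^ ℓ) ^ (-γ) := by
      intro ℓ _
      have h1 : (⌈A ℓ⌉₊ : ℝ) ≤ A ℓ + 1 := (Nat.ceil_lt_add_one (hA0 ℓ).le).le
      have h2 : (0:ℝ) < c₃ * (h₀ / m ^ ℓ) ^ (-γ) :=
        mul_pos hc₃ (Real.rpow_pos_of_pos (hx ℓ) _)
      calc (⌈A ℓ⌉₊ : ℝ) * (c₃ * (h₀ / m ^ ℓ) ^ (-γ))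
          ≤ (A ℓ + 1) * (c₃ * (h₀ / m ^ ℓ) ^ (-γ)) :=
            mul_le_mul_of_nonneg_right h1 h2.le
        _ = (2 * c₂ * c₃ * S / ε ^ 2)
              * ((h₀ / m ^ ℓ) ^ ((β + γ) / 2) * (h₀ / m ^ ℓ) ^ (-γ))
            + c₃ * (h₀ / m ^ ℓ) ^ (-γ) := by
            simp only [hAdef]; ring
        _ = (2 * c₂ * c₃ * S / ε ^ 2) * (h₀ / m ^ ℓ) ^ (-δ)
            + c₃ * (h₀ / m ^ ℓ) ^ (-γ) := by rw [hb ℓ]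
    have hsum : ∑ ℓ ∈ range (L + 1), (⌈A ℓ⌉₊ : ℝ) * (c₃ * (h₀ / m ^ ℓ) ^ (-γ))
        ≤ (2 * c₂ * c₃ * S / ε ^ 2) * S
          + c₃ * ∑ ℓ ∈ range (L + 1), (h₀ / m ^ ℓ) ^ (-γ) := by
      calc ∑ ℓ ∈ range (L + 1), (⌈A ℓ⌉₊ : ℝ) * (c₃ * (h₀ / m ^ ℓ) ^ (-γ))
          ≤ ∑ ℓ ∈ range (L + 1), ((2 * c₂ * c₃ * S / ε ^ 2) * (h₀ / m ^ ℓ) ^ (-δ)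
              + c₃ * (h₀ / m ^ ℓ) ^ (-γ)) := Finset.sum_le_sum hstep
        _ = (2 * c₂ * c₃ * S / ε ^ 2) * S
            + c₃ * ∑ ℓ ∈ range (L + 1), (h₀ / m ^ ℓ) ^ (-γ) := by
            rw [sum_add_distrib, ← mul_sum, ← mul_sum, ← hSdef]
    have hLx : (0:ℝ) < h₀ / m ^ L := hx L
    have hLconv : ∀ c : ℝ, 0 < c → (h₀ / m ^ L) ^ (-c) ≤ D ^ c * ε ^ (-c / α) := by
      intro c hc
      have e1 : (h₀ / m ^ L) ^ (-c) = ((h₀ / m ^ L)⁻¹) ^ c := by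
        rw [Real.rpow_neg hLx.le, ← Real.inv_rpow hLx.le]
      rw [e1]
      calc ((h₀ / m ^ L)⁻¹) ^ c ≤ (D * ε ^ (-1 / α)) ^ c :=
            Real.rpow_le_rpow (inv_nonneg.mpr hLx.le) hhL hc.le
        _ = D ^ c * (ε ^ (-1 / α)) ^ c :=
            Real.mul_rpow hD0.le (Real.rpow_nonneg hε0.le _)
        _ = D ^ c * ε ^ (-c / α) := by
            rw [← Real.rpow_mul hε0.le, show (-1 / α) * c = -c / α by ring]
    have hS2 : S ≤ CS * (D ^ δ * ε ^ (-δ / α)) := by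
      calc S ≤ CS * (h₀ / m ^ L) ^ (-δ) := by
            rw [hSdef, hCSdef]; exact mlmc_geomS m hm1 h₀ hh₀ δ hδ L
        _ ≤ CS * (D ^ δ * ε ^ (-δ / α)) :=
            mul_le_mul_of_nonneg_left (hLconv δ hδ) hCS0.le
    have hG : ∑ ℓ ∈ range (L + 1), (h₀ / m ^ ℓ) ^ (-γ) ≤ Cγ * (D ^ γ * ε ^ (-γ / α)) := by
      calc ∑ ℓ ∈ range (L + 1), (h₀ / m ^ ℓ) ^ (-γ) ≤ Cγ * (h₀ / m ^ L) ^ (-γ) := by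
            rw [hCγdef]; exact mlmc_geomS m hm1 h₀ hh₀ γ hγ L
        _ ≤ Cγ * (D ^ γ * ε ^ (-γ / α)) :=
            mul_le_mul_of_nonneg_left (hLconv γ hγ) hCγ0.le
    -- rpow algebra for ε
    have hEε : ε ^ (-(2 * δ) / α) / ε ^ 2 = ε ^ (-2 - (γ - β) / α) := by
      have h2 : ε ^ ((-2 : ℝ)) = (ε ^ 2)⁻¹ := by
        rw [Real.rpow_neg hε0.le, show ((2:ℝ)) = ((2:ℕ) : ℝ) by norm_num, Real.rpow_natCast]
      rw [show (-2 - (γ - β) / α) = -(2 * δ) / α + (-2 : ℝ) by rw [hδdef]; ring,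
        Real.rpow_add hε0, h2, div_eq_mul_inv]
    have hSsq : S ^ 2 ≤ (CS * D ^ δ) ^ 2 * ε ^ (-(2 * δ) / α) := by
      calc S ^ 2 ≤ (CS * (D ^ δ * ε ^ (-δ / α))) ^ 2 := pow_le_pow_left₀ hS0.le hS2 2
        _ = (CS * D ^ δ) ^ 2 * (ε ^ (-δ / α)) ^ 2 := by ring
        _ = (CS * D ^ δ) ^ 2 * ε ^ (-(2 * δ) / α) := by
            rw [sq (ε ^ (-δ / α)), ← Real.rpow_add hε0,
              show (-δ / α + -δ / α) = -(2 * δ) / α by ring]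
    have hE1 : (2 * c₂ * c₃ * S / ε ^ 2) * S
        ≤ 2 * c₂ * c₃ * (CS * D ^ δ) ^ 2 * ε ^ (-2 - (γ - β) / α) := by
      have e1 : (2 * c₂ * c₃ * S / ε ^ 2) * S = 2 * c₂ * c₃ * S ^ 2 / ε ^ 2 := by ring
      rw [e1]
      calc 2 * c₂ * c₃ * S ^ 2 / ε ^ 2
          ≤ 2 * c₂ * c₃ * ((CS * D ^ δ) ^ 2 * ε ^ (-(2 * δ) / α)) / ε ^ 2 := by
            gcongr
        _ = 2 * c₂ * c₃ * (CS * D ^ δ) ^ 2 * (ε ^ (-(2 * δ) / α) / ε ^ 2) := by ring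
        _ = 2 * c₂ * c₃ * (CS * D ^ δ) ^ 2 * ε ^ (-2 - (γ - β) / α) := by rw [hEε]
    have hexp : -2 - (γ - β) / α ≤ -γ / α := by
      have h1 : β / α ≤ 2 := (div_le_iff₀ hα).mpr (by linarith)
      have h2 : γ / α - (γ - β) / α = β / α := by field_simp; ring
      rw [neg_div]
      linarith
    have hE2 : c₃ * ∑ ℓ ∈ range (L + 1), (h₀ / m ^ ℓ) ^ (-γ)
        ≤ c₃ * Cγ * D ^ γ * ε ^ (-2 - (γ - β) / α) := by
      have h3 : ε ^ (-γ / α) ≤ ε ^ (-2 - (γ - β) / α) :=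
        Real.rpow_le_rpow_of_exponent_ge hε0 hε1.le hexp
      calc c₃ * ∑ ℓ ∈ range (L + 1), (h₀ / m ^ ℓ) ^ (-γ)
          ≤ c₃ * (Cγ * (D ^ γ * ε ^ (-γ / α))) := mul_le_mul_of_nonneg_left hG hc₃.le
        _ = c₃ * Cγ * D ^ γ * ε ^ (-γ / α) := by ring
        _ ≤ c₃ * Cγ * D ^ γ * ε ^ (-2 - (γ - β) / α) := by
            exact mul_le_mul_of_nonneg_left h3 (by positivity)
    calc ∑ ℓ ∈ range (L + 1), ((⌈A ℓ⌉₊ : ℝ)) * (c₃ * (h₀ / m ^ ℓ) ^ (-γ))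
        ≤ (2 * c₂ * c₃ * S / ε ^ 2) * S
          + c₃ * ∑ ℓ ∈ range (L + 1), (h₀ / m ^ ℓ) ^ (-γ) := hsum
      _ ≤ (2 * c₂ * c₃ * (CS * D ^ δ) ^ 2 + c₃ * Cγ * D ^ γ) * ε ^ (-2 - (γ - β) / α) := by
          rw [add_mul]; exact add_le_add hE1 hE2
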